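/- Let a, b > 0 with a² - 4b ≥ (1/4) a², let λ₁ = (-a - √(a²-4b))/2 and λ₂ = (-a + √(a²-4b))/2, and let t ≥ 0. Then |(e^{λ₁ t} - e^{λ₂ t})/(λ₁ - λ₂)| ≤ (2/a)(e^{-(3/4) a t} + e^{-(b/a) t}). -/

import Mathlib

theorem stmt4 (a b l1 l2 t : ℝ) (ha : 0 < a) (hb : 0 < b)
    (hgap : (1 / 4) * a ^ 2 ≤ a ^ 2 - 4 * b)
    (hl1 : l1 = (-a - Real.sqrt (a ^ 2 - 4 * b)) / 2)
    (hl2 : l2 = (-a + Real.sqrt (a ^ 2 - 4 * b)) / 2)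
    (ht : 0 ≤ t) :
    |(Real.exp (l1 * t) - Real.exp (l2 * t)) / (l1 - l2)| ≤
      (2 / a) * (Real.exp (-(3 / 4) * a * t) + Real.exp (-(b / a) * t)) := by
  set s := Real.sqrt (a ^ 2 - 4 * b) with hs
  have hD : (0:ℝ) ≤ a ^ 2 - 4 * b := le_trans (by positivity) hgap
  have hs2 : s ^ 2 = a ^ 2 - 4 * b := Real.sq_sqrt hD
  have hsge : a / 2 ≤ s := by
    have : Real.sqrt ((a / 2) ^ 2) ≤ s := by
      apply Real.sqrt_le_sqrt; nlinarith
    rwa [Real.sqrt_sq (by positivity)] at this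
  have hspos : 0 < s := lt_of_lt_of_le (by positivity) hsge
  have hl1le : l1 ≤ -(3 / 4) * a := by rw [hl1]; nlinarith
  have hl2le : l2 ≤ -(b / a) := by
    rw [hl2]
    have h1 : s ≤ a - 2 * b / a := by
      have h2 : (a - 2 * b / a) ^ 2 = a ^ 2 - 4 * b + (2 * b / a) ^ 2 := by
        field_simp; ring
      nlinarith [sq_nonneg (2 * b / a), sq_nonneg (s - (a - 2 * b / a)), hspos]
    have hba : b / a * a = b := by field_simp
    have h2b : 2 * b / a = 2 * (b / a) := by ring
    linarith
  have hsub : l1 - l2 = -s := by rw [hl1, hl2]; ring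
  have hnum : |Real.exp (l1 * t) - Real.exp (l2 * t)| ≤
      Real.exp (-(3 / 4) * a * t) + Real.exp (-(b / a) * t) := by
    have e1 : Real.exp (l1 * t) ≤ Real.exp (-(3 / 4) * a * t) :=
      Real.exp_le_exp.2 (mul_le_mul_of_nonneg_right hl1le ht)
    have e2 : Real.exp (l2 * t) ≤ Real.exp (-(b / a) * t) :=
      Real.exp_le_exp.2 (by nlinarith [mul_le_mul_of_nonneg_right hl2le ht])
    have := abs_sub_abs_le_abs_sub (Real.exp (l1 * t)) (Real.exp (l2 * t))
    rw [abs_sub_le_iff]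
    constructor <;> nlinarith [Real.exp_pos (l1 * t), Real.exp_pos (l2 * t)]
  rw [abs_div, hsub, abs_neg, abs_of_pos hspos]
  rw [div_le_iff₀ hspos]
  have key : (2 / a) * s ≥ 1 := by
    rw [ge_iff_le, ← div_le_iff₀' (by positivity : (0:ℝ) < 2 / a)]
    calc 1 / (2 / a) = a / 2 := by field_simp
    _ ≤ s := hsge
  calc |Real.exp (l1 * t) - Real.exp (l2 * t)|
      ≤ Real.exp (-(3 / 4) * a * t) + Real.exp (-(b / a) * t) := hnum
    _ = (Real.exp (-(3 / 4) * a * t) + Real.exp (-(b / a) * t)) * 1 := by ring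
    _ ≤ (Real.exp (-(3 / 4) * a * t) + Real.exp (-(b / a) * t)) * ((2 / a) * s) := by
        apply mul_le_mul_of_nonneg_left key; positivity
    _ = 2 / a * (Real.exp (-(3 / 4) * a * t) + Real.exp (-(b / a) * t)) * s := by ring
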